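/- Let A, B ⊆ Z_m^n be sets and let ω be a complex primitive m-th root of unity. If A ⊆ Spec_ε(B), then there exist subsets A' ⊆ A and B' ⊆ B with |A'| ≥ |A|/m and |B'| ≥ ε^2 · (|A|/|span(A)|) · |B| such that D_ω(A',B') = 1, i.e., the inner product ⟨a,b⟩ mod m is the same constant for all a ∈ A', b ∈ B'. -/

import Mathlib

open Finset

/-- Inner product of two vectors in `(ZMod m)^n`. -/
def mvInner {m n : ℕ} (u v : Fin n → ZMod m) : ZMod m := ∑ k, u k * v k

section Aux
variable {m n : ℕ} [NeZero m] {ω : ℂ}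

lemma mvInner_add_left (u v w : Fin n → ZMod m) :
    mvInner (u + v) w = mvInner u w + mvInner v w := by
  simp [mvInner, add_mul, Finset.sum_add_distrib]

lemma mvInner_neg_left (u w : Fin n → ZMod m) :
    mvInner (-u) w = - mvInner u w := by
  simp [mvInner]

lemma mvInner_zero_left (w : Fin n → ZMod m) : mvInner (0 : Fin n → ZMod m) w = 0 := by
  simp [mvInner]

lemma mvInner_sub_right (u v w : Fin n → ZMod m) :
    mvInner u (v - w) = mvInner u v - mvInner u w := by
  simp [mvInner, mul_sub, Finset.sum_sub_distrib]

lemma pow_val_mod (hωm : ω ^ m = 1) (k : ℕ) : ω ^ (k % m) = ω ^ k := by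
  conv_rhs => rw [← Nat.div_add_mod k m]
  rw [pow_add, pow_mul, hωm, one_pow, one_mul]

lemma chi_add (hωm : ω ^ m = 1) (u v : ZMod m) :
    ω ^ (u + v).val = ω ^ u.val * ω ^ v.val := by
  rw [ZMod.val_add, pow_val_mod hωm, pow_add]

lemma chi_conj (hωm : ω ^ m = 1) (u : ZMod m) :
    starRingEnd ℂ (ω ^ u.val) = ω ^ (-u).val := by
  have h1 : ω ^ u.val * ω ^ (-u).val = 1 := by
    rw [← chi_add hωm, add_neg_cancel]
    simp
  have habs : ‖ω ^ u.val‖ = 1 := by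
    have h := Complex.norm_eq_one_of_pow_eq_one hωm (NeZero.ne m)
    rw [norm_pow]
    simp [h]
  rw [← Complex.inv_eq_conj habs]
  exact inv_eq_of_mul_eq_one_left (by rw [mul_comm] at h1; exact h1) |>.symm ▸ rfl

lemma chi_eq_one_iff (hω : IsPrimitiveRoot ω m) (u : ZMod m) :
    ω ^ u.val = 1 ↔ u = 0 := by
  constructor
  · intro h
    have hd : m ∣ u.val := (hω.pow_eq_one_iff_dvd u.val).1 h
    have hlt : u.val < m := ZMod.val_lt u
    have hv : u.val = 0 := Nat.eq_zero_of_dvd_of_lt hd hlt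
    exact (ZMod.val_eq_zero u).1 hv
  · intro h; rw [h]; simp

end Aux

section Orth
variable {m n : ℕ} [NeZero m] {ω : ℂ}

lemma orth_sum (hω : IsPrimitiveRoot ω m)
    (A : Finset (Fin n → ZMod m)) (x : Fin n → ZMod m)
    (HF : Finset (Fin n → ZMod m))
    (hHF : ∀ y, y ∈ HF ↔ y ∈ AddSubgroup.closure (A : Set (Fin n → ZMod m))) :
    ∑ a ∈ HF, ω ^ (mvInner a x).val =
      if ∀ a ∈ A, mvInner a x = 0 then (HF.card : ℂ) else 0 := by
  have hωm : ω ^ m = 1 := hω.pow_eq_one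
  by_cases h : ∀ a ∈ A, mvInner a x = 0
  · rw [if_pos h]
    have hall : ∀ a ∈ HF, mvInner a x = 0 := by
      intro a ha
      rw [hHF] at ha
      induction ha using AddSubgroup.closure_induction with
      | mem y hy => exact h y hy
      | zero => exact mvInner_zero_left x
      | add y z _ _ hy hz => rw [mvInner_add_left, hy, hz, add_zero]
      | neg y _ hy => rw [mvInner_neg_left, hy, neg_zero]
    rw [Finset.sum_congr rfl (fun a ha => by rw [hall a ha, ZMod.val_zero, pow_zero]),
      Finset.sum_const, nsmul_eq_mul, mul_one]
  · rw [if_neg h]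
    push_neg at h
    obtain ⟨a₀, ha₀A, ha₀⟩ := h
    have ha₀H : a₀ ∈ HF := (hHF a₀).2 (AddSubgroup.subset_closure ha₀A)
    set S := ∑ a ∈ HF, ω ^ (mvInner a x).val with hS
    have key : S = ω ^ (mvInner a₀ x).val * S := by
      rw [hS, Finset.mul_sum]
      refine Finset.sum_nbij' (fun a => a - a₀) (fun a => a + a₀) ?_ ?_ ?_ ?_ ?_
      · intro a ha
        rw [hHF] at ha ⊢
        exact sub_mem ha ((hHF a₀).1 ha₀H)
      · intro a ha
        rw [hHF] at ha ⊢
        exact add_mem ha ((hHF a₀).1 ha₀H)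
      · intro a _; simp
      · intro a _; simp
      · intro a _
        have : a = a₀ + (a - a₀) := by ring
        conv_lhs => rw [this]
        rw [mvInner_add_left, chi_add hωm]
    have hne : ω ^ (mvInner a₀ x).val ≠ 1 := fun h1 => ha₀ ((chi_eq_one_iff hω _).1 h1)
    have h0 : (1 - ω ^ (mvInner a₀ x).val) * S = 0 := by
      rw [sub_mul, one_mul, ← key, sub_self]
    rcases mul_eq_zero.1 h0 with h1 | h1
    · exact absurd (sub_eq_zero.1 h1).symm hne
    · exact h1
end Orth

section Main
variable {m n : ℕ} [NeZero m] {ω : ℂ}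

lemma sum_normSq_eq (hω : IsPrimitiveRoot ω m)
    (A B : Finset (Fin n → ZMod m)) (HF : Finset (Fin n → ZMod m))
    (hHF : ∀ y, y ∈ HF ↔ y ∈ AddSubgroup.closure (A : Set (Fin n → ZMod m))) :
    ((∑ a ∈ HF, Complex.normSq (∑ b ∈ B, ω ^ (mvInner a b).val) : ℝ) : ℂ)
      = (HF.card : ℂ) * ∑ b ∈ B, ∑ b' ∈ B,
          (if ∀ a ∈ A, mvInner a b = mvInner a b' then (1 : ℂ) else 0) := by
  have hωm : ω ^ m = 1 := hω.pow_eq_one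
  push_cast
  calc ∑ a ∈ HF, (Complex.normSq (∑ b ∈ B, ω ^ (mvInner a b).val) : ℂ)
      = ∑ a ∈ HF, ∑ b ∈ B, ∑ b' ∈ B, ω ^ (mvInner a (b - b')).val := by
        refine Finset.sum_congr rfl fun a _ => ?_
        rw [← Complex.mul_conj, map_sum, Finset.sum_mul_sum]
        refine Finset.sum_congr rfl fun b _ => Finset.sum_congr rfl fun b' _ => ?_
        rw [chi_conj hωm, ← chi_add hωm, mvInner_sub_right, sub_eq_add_neg]
    _ = ∑ b ∈ B, ∑ b' ∈ B, ∑ a ∈ HF, ω ^ (mvInner a (b - b')).val := by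
        rw [Finset.sum_comm]
        exact Finset.sum_congr rfl fun b _ => Finset.sum_comm
    _ = ∑ b ∈ B, ∑ b' ∈ B,
          (if ∀ a ∈ A, mvInner a b = mvInner a b' then (HF.card : ℂ) else 0) := by
        refine Finset.sum_congr rfl fun b _ => Finset.sum_congr rfl fun b' _ => ?_
        rw [orth_sum hω A (b - b') HF hHF]
        exact if_congr (forall₂_congr fun a _ => by
          rw [mvInner_sub_right, sub_eq_zero]) rfl rfl
    _ = (HF.card : ℂ) * ∑ b ∈ B, ∑ b' ∈ B,
          (if ∀ a ∈ A, mvInner a b = mvInner a b' then (1 : ℂ) else 0) := by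
        rw [Finset.mul_sum]
        refine Finset.sum_congr rfl fun b _ => ?_
        rw [Finset.mul_sum]
        exact Finset.sum_congr rfl fun b' _ => by rw [mul_ite, mul_one, mul_zero]
end Main

/-- Lemma 6.4: if `A ⊆ Spec_ε(B)`, then there are subsets `A' ⊆ A` with `|A'| ≥ |A|/m`
and `B' ⊆ B` with `|B'| ≥ ε²·(|A|/|span(A)|)·|B|` such that the inner product `⟨a,b⟩` is
the same constant for all `a ∈ A'`, `b ∈ B'` (i.e. `D_ω(A',B') = 1`). -/
theorem spec_to_monochromatic (m n : ℕ) [NeZero m] (hm : 2 ≤ m)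
    (ω : ℂ) (hω : IsPrimitiveRoot ω m)
    (A B : Finset (Fin n → ZMod m)) (ε : ℝ) (hε : 0 ≤ ε)
    (hspec : ∀ a ∈ A,
      ε ≤ ‖(∑ b ∈ B, ω ^ (mvInner a b).val) / (B.card : ℂ)‖) :
    ∃ A' ⊆ A, ∃ B' ⊆ B,
      (A.card : ℝ) / (m : ℝ) ≤ (A'.card : ℝ) ∧
      ε ^ 2 * ((A.card : ℝ) /
        (((AddSubgroup.closure (A : Set (Fin n → ZMod m)) :
          AddSubgroup (Fin n → ZMod m)) : Set (Fin n → ZMod m)).ncard : ℝ)) * (B.card : ℝ)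
        ≤ (B'.card : ℝ) ∧
      ∃ c : ZMod m, ∀ a ∈ A', ∀ b ∈ B', mvInner a b = c := by
  classical
  have hm1 : (1:ℝ) ≤ (m:ℝ) := by exact_mod_cast le_trans (by norm_num) hm
  by_cases htriv : ε = 0 ∨ A = ∅ ∨ B = ∅
  · refine ⟨A, subset_rfl, ∅, empty_subset _, div_le_self (by positivity) hm1, ?_, 0, by simp⟩
    rcases htriv with h | h | h
    · simp [h]
    · simp [h]
    · simp [h]
  push_neg at htriv
  obtain ⟨hε0, hA0, hB0⟩ := htriv
  have hεpos : 0 < ε := lt_of_le_of_ne hε (Ne.symm hε0)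
  have hAne : A.Nonempty := hA0
  have hBne : B.Nonempty := hB0
  have hBpos : (0:ℝ) < B.card := by exact_mod_cast card_pos.2 hBne
  have hfin : ((AddSubgroup.closure (A : Set (Fin n → ZMod m)) :
      AddSubgroup (Fin n → ZMod m)) : Set (Fin n → ZMod m)).Finite := Set.toFinite _
  set HF := hfin.toFinset with hHFdef
  have hHF : ∀ y, y ∈ HF ↔ y ∈ AddSubgroup.closure (A : Set (Fin n → ZMod m)) :=
    fun y => hfin.mem_toFinset
  have hncard : (((AddSubgroup.closure (A : Set (Fin n → ZMod m)) :
      AddSubgroup (Fin n → ZMod m)) : Set (Fin n → ZMod m)).ncard : ℝ) = HF.card := by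
    rw [Set.ncard_eq_toFinset_card _ hfin]
  have hHFpos : (0:ℝ) < HF.card := by
    have h0 : (0 : Fin n → ZMod m) ∈ HF := (hHF 0).2 (zero_mem _)
    exact_mod_cast card_pos.2 ⟨0, h0⟩
  set S : (Fin n → ZMod m) → ℂ := fun a => ∑ b ∈ B, ω ^ (mvInner a b).val with hSdef
  -- lower bound on each normSq
  have hlow : ∀ a ∈ A, ε^2 * (B.card:ℝ)^2 ≤ Complex.normSq (S a) := by
    intro a ha
    have h1 := hspec a ha
    rw [norm_div, Complex.norm_natCast] at h1
    have h2 : ε * B.card ≤ ‖S a‖ := by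
      rw [← le_div_iff₀ hBpos]; exact h1
    have h4 := mul_le_mul h2 h2 (by positivity) (norm_nonneg (S a))
    rw [← Complex.sq_norm]
    nlinarith [h4]
  have hsubHF : A ⊆ HF := fun a ha => (hHF a).2 (AddSubgroup.subset_closure ha)
  have h3 : ε^2 * A.card * (B.card:ℝ)^2 ≤ ∑ a ∈ HF, Complex.normSq (S a) := by
    calc ε^2 * A.card * (B.card:ℝ)^2 = ∑ _a ∈ A, ε^2*(B.card:ℝ)^2 := by
          rw [Finset.sum_const, nsmul_eq_mul]; ring
      _ ≤ ∑ a ∈ A, Complex.normSq (S a) := Finset.sum_le_sum hlow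
      _ ≤ ∑ a ∈ HF, Complex.normSq (S a) :=
          Finset.sum_le_sum_of_subset_of_nonneg hsubHF
            (fun _ _ _ => Complex.normSq_nonneg _)
  -- identity
  have hid : ∑ a ∈ HF, Complex.normSq (S a)
      = (HF.card : ℝ) * ∑ b ∈ B, ∑ b' ∈ B,
          (if ∀ a ∈ A, mvInner a b = mvInner a b' then (1:ℝ) else 0) := by
    have h := sum_normSq_eq hω A B HF hHF
    have h2 : ((∑ a ∈ HF, Complex.normSq (S a) : ℝ) : ℂ)
        = (((HF.card : ℝ) * ∑ b ∈ B, ∑ b' ∈ B,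
            (if ∀ a ∈ A, mvInner a b = mvInner a b' then (1:ℝ) else 0) : ℝ) : ℂ) := by
      rw [h]
      push_cast [apply_ite ((↑) : ℝ → ℂ)]
      norm_num
    exact_mod_cast h2
  -- pigeonhole on B
  obtain ⟨b₀, hb₀B, hb₀max⟩ := Finset.exists_max_image B
    (fun b => (B.filter (fun b' => ∀ a ∈ A, mvInner a b = mvInner a b')).card) hBne
  set B' := B.filter (fun b' => ∀ a ∈ A, mvInner a b₀ = mvInner a b') with hB'def
  have hNle : ∑ b ∈ B, ∑ b' ∈ B,
      (if ∀ a ∈ A, mvInner a b = mvInner a b' then (1:ℝ) else 0)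
      ≤ (B.card:ℝ) * B'.card := by
    calc ∑ b ∈ B, ∑ b' ∈ B, (if ∀ a ∈ A, mvInner a b = mvInner a b' then (1:ℝ) else 0)
        = ∑ b ∈ B, ((B.filter (fun b' => ∀ a ∈ A, mvInner a b = mvInner a b')).card : ℝ) :=
          Finset.sum_congr rfl fun b _ => by rw [Finset.sum_boole]
      _ ≤ ∑ _b ∈ B, (B'.card : ℝ) :=
          Finset.sum_le_sum fun b hb => by exact_mod_cast hb₀max b hb
      _ = (B.card:ℝ) * B'.card := by rw [Finset.sum_const, nsmul_eq_mul]
  have key : ε^2 * A.card * (B.card:ℝ)^2 ≤ (HF.card:ℝ) * ((B.card:ℝ) * B'.card) :=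
    h3.trans (by rw [hid]; exact mul_le_mul_of_nonneg_left hNle (le_of_lt hHFpos))
  have hB'big : ε ^ 2 * ((A.card : ℝ) /
      (((AddSubgroup.closure (A : Set (Fin n → ZMod m)) :
        AddSubgroup (Fin n → ZMod m)) : Set (Fin n → ZMod m)).ncard : ℝ)) * (B.card : ℝ)
      ≤ (B'.card : ℝ) := by
    rw [hncard]
    have heq : ε^2 * ((A.card:ℝ)/(HF.card:ℝ)) * B.card
        = (ε^2 * A.card * B.card)/HF.card := by ring
    rw [heq, div_le_iff₀ hHFpos]
    nlinarith [key, hBpos]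
  -- pigeonhole on A
  obtain ⟨c₀, _, hc₀max⟩ := Finset.exists_max_image (univ : Finset (ZMod m))
    (fun c => (A.filter (fun a => mvInner a b₀ = c)).card) ⟨0, mem_univ 0⟩
  set A' := A.filter (fun a => mvInner a b₀ = c₀) with hA'def
  have hcardA : A.card = ∑ c ∈ (univ : Finset (ZMod m)),
      (A.filter (fun a => mvInner a b₀ = c)).card :=
    Finset.card_eq_sum_card_fiberwise (fun a _ => mem_univ _)
  have hA'big : (A.card:ℝ)/m ≤ A'.card := by
    have hm0 : (0:ℝ) < m := by linarith
    rw [div_le_iff₀ hm0]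
    have hnat : A.card ≤ m * A'.card := by
      calc A.card = ∑ c ∈ (univ : Finset (ZMod m)),
            (A.filter (fun a => mvInner a b₀ = c)).card := hcardA
        _ ≤ ∑ _c ∈ (univ : Finset (ZMod m)), A'.card :=
            Finset.sum_le_sum fun c _ => hc₀max c (mem_univ c)
        _ = m * A'.card := by
            rw [Finset.sum_const, smul_eq_mul, Finset.card_univ, ZMod.card]
    calc (A.card:ℝ) ≤ (m * A'.card : ℕ) := by exact_mod_cast hnat
      _ = (A'.card:ℝ) * m := by push_cast; ring
  refine ⟨A', Finset.filter_subset _ _, B', Finset.filter_subset _ _, hA'big, hB'big, c₀, ?_⟩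
  intro a ha b hb
  rw [hA'def, Finset.mem_filter] at ha
  rw [hB'def, Finset.mem_filter] at hb
  rw [← hb.2 a ha.1, ha.2]
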